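/- arXiv:2309.04398 — 3 statements merged into one kernel-verified Lean document; each statement's English description precedes it below -/
import Mathlib

section
/- For every positive integer n, σmex̄(n) is odd if and only if n is a triangular number, i.e., n = j(j+1)/2 for some positive integer j. In particular, σmex̄(n) is even for all n not of this form. -/
/-- An overpartition of `n`: a multiset of non-overlined positive parts together with a
finite set of overlined positive parts (at most one overlined copy per part size). -/
structure Overpartition (n : ℕ) where
  parts : Multiset ℕ              -- non-overlined parts
  overlined : Finset ℕ            -- overlined parts (distinct sizes)
  parts_pos : ∀ i ∈ parts, 0 < i
  overlined_pos : ∀ i ∈ overlined, 0 < i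
  sum_eq : parts.sum + ∑ i ∈ overlined, i = n

/-- Minimal excludant of an overpartition: the least positive integer not among
the non-overlined parts. -/
noncomputable def Overpartition.mex {n : ℕ} (π : Overpartition n) : ℕ :=
  sInf {m : ℕ | 0 < m ∧ m ∉ π.parts}

/-- Least `r`-gap: the least positive integer occurring fewer than `r` times among
the non-overlined parts. -/
noncomputable def Overpartition.rgap {n : ℕ} (r : ℕ) (π : Overpartition n) : ℕ :=
  sInf {m : ℕ | 0 < m ∧ π.parts.count m < r}

/-- `σmex̄(n)`: sum of minimal excludants over all overpartitions of `n`. -/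
noncomputable def sigmaMex (n : ℕ) : ℕ := ∑ᶠ π : Overpartition n, π.mex

/-- `σ_r mex̄(n)`: sum of least `r`-gaps over all overpartitions of `n`. -/
noncomputable def sigmaRMex (r n : ℕ) : ℕ := ∑ᶠ π : Overpartition n, π.rgap r

/-- `p̄(n)`: the number of overpartitions of `n`. -/
noncomputable def pbar (n : ℕ) : ℕ := Nat.card (Overpartition n)

namespace OPAux

theorem op_ext {n : ℕ} {a b : Overpartition n} (h1 : a.parts = b.parts)
    (h2 : a.overlined = b.overlined) : a = b := by
  cases a; cases b; simp_all

variable {n : ℕ}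

lemma over_val_sum (π : Overpartition n) : π.overlined.val.sum = ∑ i ∈ π.overlined, i := by
  rw [Finset.sum, Multiset.map_id']

lemma parts_sum_le (π : Overpartition n) : π.parts.sum ≤ n := by
  have := π.sum_eq; omega

lemma mem_parts_le {k : ℕ} (π : Overpartition n) (hk : k ∈ π.parts) : k ≤ n :=
  le_trans (Multiset.single_le_sum (fun x _ => Nat.zero_le x) _ hk) (parts_sum_le π)

lemma mexSet_nonempty (π : Overpartition n) : {m : ℕ | 0 < m ∧ m ∉ π.parts}.Nonempty :=
  ⟨n + 1, Nat.succ_pos n, fun h => by have := mem_parts_le π h; omega⟩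

lemma lt_mex_iff {m : ℕ} (π : Overpartition n) :
    m < π.mex ↔ ∀ k, 1 ≤ k → k ≤ m → k ∈ π.parts := by
  constructor
  · intro h k h1 h2
    by_contra hk
    have := Nat.sInf_le (show k ∈ {m : ℕ | 0 < m ∧ m ∉ π.parts} from ⟨h1, hk⟩)
    rw [Overpartition.mex] at h; omega
  · intro h
    by_contra h'
    have hmem := Nat.sInf_mem (mexSet_nonempty π)
    rw [← Overpartition.mex] at hmem
    exact hmem.2 (h _ hmem.1 (by omega))

lemma mex_le (π : Overpartition n) : π.mex ≤ n + 1 :=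
  Nat.sInf_le ⟨Nat.succ_pos n, fun h => by have := mem_parts_le π h; omega⟩

def st (m : ℕ) : Multiset ℕ := (Finset.Icc 1 m).val

lemma mem_st {k m : ℕ} : k ∈ st m ↔ 1 ≤ k ∧ k ≤ m := by
  simp [st, ← Finset.mem_def]

lemma st_nodup (m : ℕ) : (st m).Nodup := (Finset.Icc 1 m).nodup

lemma count_st {k m : ℕ} : (st m).count k = if 1 ≤ k ∧ k ≤ m then 1 else 0 := by
  split_ifs with h
  · exact Multiset.count_eq_one_of_mem (st_nodup m) (mem_st.2 h)
  · exact Multiset.count_eq_zero_of_notMem (fun hc => h (mem_st.1 hc))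

lemma st_sum_two (m : ℕ) : (st m).sum * 2 = m * (m + 1) := by
  induction m with
  | zero => simp [st]
  | succ m ih =>
    have : st (m + 1) = (m + 1) ::ₘ st m := by
      rw [st, st, show Finset.Icc 1 (m+1) = insert (m+1) (Finset.Icc 1 m) by
        ext x; simp [Finset.mem_Icc]; omega,
        Finset.insert_val_of_notMem (by simp [Finset.mem_Icc])]
    rw [this, Multiset.sum_cons]
    ring_nf
    ring_nf at ih
    omega

lemma st_le_parts {m : ℕ} (π : Overpartition n) (h : m < π.mex) : st m ≤ π.parts := by
  rw [st, Multiset.le_iff_subset (Finset.Icc 1 m).nodup]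
  intro k hk
  rw [← st, mem_st] at hk
  exact (lt_mex_iff π).1 h k hk.1 hk.2

instance : Finite (Overpartition n) := by
  apply Finite.of_injective (β := (Σ _k : Fin (n+1), Nat.Partition _k) ×
    (Σ _k : Fin (n+1), Nat.Partition _k))
    (f := fun π => (⟨⟨π.parts.sum, by have := π.sum_eq; omega⟩,
      ⟨π.parts, fun hi => π.parts_pos _ hi, rfl⟩⟩,
      ⟨⟨π.overlined.val.sum, by have := π.sum_eq; rw [over_val_sum]; omega⟩,
      ⟨π.overlined.val, fun hi => π.overlined_pos _ hi, rfl⟩⟩))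
  intro a b h
  have h1 := congrArg (fun x : ((Σ _k : Fin (n+1), Nat.Partition _k) ×
    (Σ _k : Fin (n+1), Nat.Partition _k)) => x.1.2.parts) h
  have h2 := congrArg (fun x : ((Σ _k : Fin (n+1), Nat.Partition _k) ×
    (Σ _k : Fin (n+1), Nat.Partition _k)) => x.2.2.parts) h
  exact op_ext h1 (Finset.val_injective h2)

noncomputable instance : Fintype (Overpartition n) := Fintype.ofFinite _

/-! ### The involution -/

abbrev P (n : ℕ) := Overpartition n × Fin (n + 1)

def total (p : P n) : Multiset ℕ := p.1.parts + p.1.overlined.val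

lemma total_pos (p : P n) : ∀ i ∈ total p, 0 < i := by
  intro i hi
  rcases Multiset.mem_add.1 hi with h | h
  · exact p.1.parts_pos _ h
  · exact p.1.overlined_pos _ h

def RR (p : P n) : Multiset ℕ := total p - st p.2.val

noncomputable def sTop (p : P n) : ℕ := (RR p).toFinset.sup id

lemma sTop_mem {p : P n} (hR : RR p ≠ 0) : sTop p ∈ RR p := by
  obtain ⟨b, hb, he⟩ := Finset.exists_mem_eq_sup (RR p).toFinset
    (Multiset.toFinset_nonempty.2 hR) id
  rw [sTop, he]
  exact Multiset.mem_toFinset.1 hb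

lemma sTop_max {p : P n} {x : ℕ} (hx : x ∈ RR p) : x ≤ sTop p :=
  Finset.le_sup (f := id) (Multiset.mem_toFinset.2 hx)

lemma RR_le_total (p : P n) : RR p ≤ total p := tsub_le_self

lemma sTop_mem_total {p : P n} (hR : RR p ≠ 0) : sTop p ∈ total p :=
  Multiset.mem_of_le (RR_le_total p) (sTop_mem hR)

lemma sTop_pos {p : P n} (hR : RR p ≠ 0) : 0 < sTop p :=
  total_pos p _ (sTop_mem_total hR)

lemma sTop_mem_parts {p : P n} (hR : RR p ≠ 0) (hs : sTop p ∉ p.1.overlined) :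
    sTop p ∈ p.1.parts := by
  rcases Multiset.mem_add.1 (sTop_mem_total hR) with h | h
  · exact h
  · exact absurd (Finset.mem_def.2 h) hs

noncomputable def g (p : P n) : P n :=
  if hR : RR p = 0 then p
  else if hs : sTop p ∈ p.1.overlined then
    (⟨p.1.parts + {sTop p}, p.1.overlined.erase (sTop p),
      by intro i hi
         rcases Multiset.mem_add.1 hi with h | h
         · exact p.1.parts_pos _ h
         · rw [Multiset.mem_singleton] at h; subst h; exact sTop_pos hR,
      fun i hi => p.1.overlined_pos _ (Finset.mem_of_mem_erase hi),
      by have h1 : ∑ i ∈ p.1.overlined.erase (sTop p), i + sTop p = ∑ i ∈ p.1.overlined, i :=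
           Finset.sum_erase_add p.1.overlined _ hs
         have h2 := p.1.sum_eq
         rw [Multiset.sum_add, Multiset.sum_singleton]
         omega⟩, p.2)
  else
    (⟨p.1.parts.erase (sTop p), insert (sTop p) p.1.overlined,
      fun i hi => p.1.parts_pos _ (Multiset.mem_of_mem_erase hi),
      by intro i hi
         rcases Finset.mem_insert.1 hi with h | h
         · subst h; exact sTop_pos hR
         · exact p.1.overlined_pos _ h,
      by have h1 : ∑ i ∈ insert (sTop p) p.1.overlined, i = sTop p + ∑ i ∈ p.1.overlined, i :=
           Finset.sum_insert hs
         have h2 := p.1.sum_eq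
         have h3 : sTop p ::ₘ p.1.parts.erase (sTop p) = p.1.parts :=
           Multiset.cons_erase (sTop_mem_parts hR hs)
         have h4 := congrArg Multiset.sum h3
         rw [Multiset.sum_cons] at h4
         rw [h1]
         omega⟩, p.2)

lemma g_snd (p : P n) : (g p).2 = p.2 := by
  rw [g]; split_ifs <;> rfl

lemma total_g (p : P n) : total (g p) = total p := by
  rw [g]
  split_ifs with hR hs
  · rfl
  · show (p.1.parts + {sTop p}) + (p.1.overlined.erase (sTop p)).val = _
    rw [Finset.erase_val]
    have : {sTop p} + p.1.overlined.val.erase (sTop p) = p.1.overlined.val := by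
      rw [Multiset.singleton_add, Multiset.cons_erase (Finset.mem_def.1 hs)]
    rw [add_assoc, this]
    rfl
  · show p.1.parts.erase (sTop p) + (insert (sTop p) p.1.overlined).val = _
    rw [Finset.insert_val_of_notMem hs, ← Multiset.singleton_add, ← add_assoc,
      add_comm (p.1.parts.erase (sTop p)) _, Multiset.singleton_add,
      Multiset.cons_erase (sTop_mem_parts hR hs)]
    rfl

lemma RR_g (p : P n) : RR (g p) = RR p := by
  rw [RR, RR, total_g, g_snd]

lemma sTop_g (p : P n) : sTop (g p) = sTop p := by
  rw [sTop, sTop, RR_g]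

lemma g_parts_case1 {p : P n} (hR : RR p ≠ 0) (hs : sTop p ∈ p.1.overlined) :
    (g p).1.parts = p.1.parts + {sTop p} := by
  rw [g, dif_neg hR, dif_pos hs]

lemma g_over_case1 {p : P n} (hR : RR p ≠ 0) (hs : sTop p ∈ p.1.overlined) :
    (g p).1.overlined = p.1.overlined.erase (sTop p) := by
  rw [g, dif_neg hR, dif_pos hs]

lemma g_parts_case2 {p : P n} (hR : RR p ≠ 0) (hs : sTop p ∉ p.1.overlined) :
    (g p).1.parts = p.1.parts.erase (sTop p) := by
  rw [g, dif_neg hR, dif_neg hs]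

lemma g_over_case2 {p : P n} (hR : RR p ≠ 0) (hs : sTop p ∉ p.1.overlined) :
    (g p).1.overlined = insert (sTop p) p.1.overlined := by
  rw [g, dif_neg hR, dif_neg hs]

lemma g_invol {p : P n} (hR : RR p ≠ 0) : g (g p) = p := by
  have hR2 : RR (g p) ≠ 0 := by rwa [RR_g]
  by_cases hs : sTop p ∈ p.1.overlined
  · have hs2 : sTop (g p) ∉ (g p).1.overlined := by
      rw [sTop_g, g_over_case1 hR hs]
      exact Finset.notMem_erase _ _
    apply Prod.ext
    · apply op_ext
      · rw [g_parts_case2 hR2 hs2, sTop_g, g_parts_case1 hR hs,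
          Multiset.erase_add_right_pos _ (Multiset.mem_singleton_self _)]
        simp
      · rw [g_over_case2 hR2 hs2, sTop_g, g_over_case1 hR hs]
        exact Finset.insert_erase hs
    · rw [g_snd, g_snd]
  · have hs2 : sTop (g p) ∈ (g p).1.overlined := by
      rw [sTop_g, g_over_case2 hR hs]
      exact Finset.mem_insert_self _ _
    apply Prod.ext
    · apply op_ext
      · rw [g_parts_case1 hR2 hs2, sTop_g, g_parts_case2 hR hs,
          add_comm, Multiset.singleton_add, Multiset.cons_erase (sTop_mem_parts hR hs)]
      · rw [g_over_case1 hR2 hs2, sTop_g, g_over_case2 hR hs]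
        exact Finset.erase_insert hs
    · rw [g_snd, g_snd]

lemma g_ne {p : P n} (hR : RR p ≠ 0) : g p ≠ p := by
  intro h
  have hc := congrArg (fun q : P n => q.1.parts.card) h
  rw [g, dif_neg hR] at hc
  split_ifs at hc with hs
  · simp only [Multiset.card_add, Multiset.card_singleton] at hc
    omega
  · simp only at hc
    rw [Multiset.card_erase_of_mem (sTop_mem_parts hR hs), Nat.pred_eq_sub_one] at hc
    have : 0 < p.1.parts.card :=
      Multiset.card_pos_iff_exists_mem.2 ⟨_, sTop_mem_parts hR hs⟩
    omega

lemma g_mem_S {p : P n} (hp : p.2.val < p.1.mex) (hR : RR p ≠ 0) :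
    (g p).2.val < (g p).1.mex := by
  rw [g_snd, lt_mex_iff]
  intro k h1 h2
  by_cases hs : sTop p ∈ p.1.overlined
  · rw [g_parts_case1 hR hs]
    exact Multiset.mem_add.2 (Or.inl ((lt_mex_iff p.1).1 hp k h1 h2))
  · rw [g_parts_case2 hR hs]
    rcases eq_or_ne k (sTop p) with rfl | hne
    · -- need count k in parts ≥ 2
      have hst : st p.2.val ≤ p.1.parts := st_le_parts p.1 hp
      have hRR : RR p = p.1.overlined.val + (p.1.parts - st p.2.val) := by
        rw [RR, total, add_comm, add_tsub_assoc_of_le hst]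
      have hmem : sTop p ∈ p.1.parts - st p.2.val := by
        have := sTop_mem hR
        rw [hRR] at this
        rcases Multiset.mem_add.1 this with h | h
        · exact absurd (Finset.mem_def.2 h) hs
        · exact h
      have hc1 : 1 ≤ (p.1.parts - st p.2.val).count (sTop p) := Multiset.count_pos.2 hmem
      have hc2 : (p.1.parts - st p.2.val).count (sTop p)
          = p.1.parts.count (sTop p) - (st p.2.val).count (sTop p) :=
        Multiset.count_sub _ _ _
      have hc3 : (st p.2.val).count (sTop p) = 1 := by
        rw [count_st, if_pos ⟨h1, h2⟩]
      have hc4 : 2 ≤ p.1.parts.count (sTop p) := by omega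
      rw [← Multiset.count_pos, Multiset.count_erase_self]
      omega
    · exact (Multiset.mem_erase_of_ne hne).2 ((lt_mex_iff p.1).1 hp k h1 h2)

open scoped Classical in
noncomputable def Sfin (n : ℕ) : Finset (P n) :=
  Finset.univ.filter (fun p => p.2.val < p.1.mex)

open scoped Classical in
noncomputable def Ffin (n : ℕ) : Finset (P n) :=
  (Sfin n).filter (fun p => RR p = 0)

open scoped Classical in
noncomputable def Mfin (n : ℕ) : Finset (P n) :=
  (Sfin n).filter (fun p => RR p ≠ 0)

open scoped Classical in
lemma card_Sfin : (Sfin n).card = ∑ π : Overpartition n, π.mex := by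
  rw [Sfin, Finset.card_filter, Fintype.sum_prod_type]
  apply Finset.sum_congr rfl
  intro π _
  rw [← Finset.card_filter, ← Finset.card_range π.mex]
  apply Finset.card_bij' (i := fun (m : Fin (n+1)) _ => m.val)
    (j := fun i hi => (⟨i, lt_of_lt_of_le (Finset.mem_range.1 hi) (mex_le π)⟩ : Fin (n+1)))
    (hi := fun m hm => Finset.mem_range.2 (Finset.mem_filter.1 hm).2)
    (hj := fun i hi => Finset.mem_filter.2 ⟨Finset.mem_univ _, Finset.mem_range.1 hi⟩)
    (left_inv := fun m hm => rfl)
    (right_inv := fun i hi => rfl)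

open scoped Classical in
lemma card_parity : (Sfin n).card % 2 = (Ffin n).card % 2 := by
  have hsplit : (Ffin n).card + (Mfin n).card = (Sfin n).card := by
    rw [Ffin, Mfin]
    exact Finset.card_filter_add_card_filter_not _
  have hsum : ∑ _x ∈ Mfin n, (1 : ZMod 2) = 0 := by
    apply Finset.sum_involution (g := fun p _ => g p)
    · intro a _; decide
    · intro a ha _
      exact g_ne (Finset.mem_filter.1 ha).2
    · intro a ha
      obtain ⟨hS, hR⟩ := Finset.mem_filter.1 ha
      have hS' := (Finset.mem_filter.1 hS).2
      refine Finset.mem_filter.2 ⟨Finset.mem_filter.2 ⟨Finset.mem_univ _, g_mem_S hS' hR⟩, ?_⟩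
      rwa [RR_g]
    · intro a ha
      exact g_invol (Finset.mem_filter.1 ha).2
  have hcast : ((Mfin n).card : ZMod 2) = 0 := by
    rwa [Finset.card_eq_sum_ones, Nat.cast_sum, Nat.cast_one]
  have heven : 2 ∣ (Mfin n).card := (ZMod.natCast_eq_zero_iff _ _).1 hcast
  omega

lemma fixed_struct {p : P n} (hp : p ∈ Ffin n) :
    p.1.parts = st p.2.val ∧ p.1.overlined = ∅ ∧ n = (st p.2.val).sum := by
  classical
  obtain ⟨hS, hR⟩ := Finset.mem_filter.1 hp
  have hS' : p.2.val < p.1.mex := (Finset.mem_filter.1 hS).2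
  have hst := st_le_parts p.1 hS'
  have htot : total p ≤ st p.2.val := tsub_eq_zero_iff_le.1 hR
  have h1 : p.1.parts ≤ total p := le_add_right le_rfl
  have hparts : p.1.parts = st p.2.val := le_antisymm (h1.trans htot) hst
  have hov : p.1.overlined.val = 0 := by
    have h2 : p.1.parts + p.1.overlined.val ≤ p.1.parts + 0 := by
      rw [add_zero]
      calc p.1.parts + p.1.overlined.val = total p := rfl
        _ ≤ st p.2.val := htot
        _ = p.1.parts := hparts.symm
    have := (add_le_add_iff_left p.1.parts).1 h2
    exact le_bot_iff.1 this
  have hov' : p.1.overlined = ∅ := Finset.val_eq_zero.1 hov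
  refine ⟨hparts, hov', ?_⟩
  have := p.1.sum_eq
  rw [hov', Finset.sum_empty, add_zero, hparts] at this
  omega

lemma tri_eq {a b : ℕ} (h : a * (a + 1) = b * (b + 1)) : a = b := by
  nlinarith [Nat.lt_irrefl a, Nat.lt_irrefl b]

lemma Ffin_subsingleton : ∀ p ∈ Ffin n, ∀ q ∈ Ffin n, p = q := by
  intro p hp q hq
  obtain ⟨hp1, hp2, hp3⟩ := fixed_struct hp
  obtain ⟨hq1, hq2, hq3⟩ := fixed_struct hq
  have hval : p.2.val = q.2.val := by
    apply tri_eq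
    have h1 := st_sum_two p.2.val
    have h2 := st_sum_two q.2.val
    omega
  refine Prod.ext (op_ext ?_ ?_) (Fin.ext hval)
  · rw [hp1, hq1, hval]
  · rw [hp2, hq2]

end OPAux

/-- For positive `n`, σmex̄(n) is odd iff `n` is a (positive) triangular number. -/
theorem stmt4 (n : ℕ) (hn : 0 < n) :
    Odd (sigmaMex n) ↔ ∃ j : ℕ, 0 < j ∧ n = j * (j + 1) / 2 := by
  classical
  have hS : sigmaMex n = (OPAux.Sfin n).card := by
    rw [sigmaMex, finsum_eq_sum_of_fintype, OPAux.card_Sfin]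
  rw [hS, Nat.odd_iff, OPAux.card_parity]
  constructor
  · intro h
    have hne : (OPAux.Ffin n).Nonempty := by
      rcases Finset.eq_empty_or_nonempty (OPAux.Ffin n) with he | hne
      · rw [he] at h; simp at h
      · exact hne
    obtain ⟨p, hp⟩ := hne
    obtain ⟨h1, h2, h3⟩ := OPAux.fixed_struct hp
    have hst2 := OPAux.st_sum_two p.2.val
    refine ⟨p.2.val, ?_, by omega⟩
    rcases Nat.eq_zero_or_pos p.2.val with h0 | h0
    · exfalso
      rw [h0] at h3
      simp [OPAux.st] at h3
      omega
    · exact h0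
  · rintro ⟨j, hj, hjn⟩
    have hev : 2 ∣ j * (j + 1) := (Nat.even_mul_succ_self j).two_dvd
    have h2n : 2 * n = j * (j + 1) := by omega
    have hsum : (OPAux.st j).sum = n := by
      have := OPAux.st_sum_two j; omega
    have hjle : j ≤ n := by
      have := Nat.mul_le_mul_left j (show 2 ≤ j + 1 by omega)
      omega
    refine Exists.elim ?_ (fun (p0 : OPAux.P n) (hp0 : p0 ∈ OPAux.Ffin n) => ?_)
    · refine ⟨(⟨OPAux.st j, ∅, fun i hi => (OPAux.mem_st.1 hi).1, by simp,
        by simpa using hsum⟩, ⟨j, by omega⟩), ?_⟩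
      refine Finset.mem_filter.2 ⟨Finset.mem_filter.2 ⟨Finset.mem_univ _, ?_⟩, ?_⟩
      · rw [OPAux.lt_mex_iff]
        intro k hk1 hk2
        exact OPAux.mem_st.2 ⟨hk1, hk2⟩
      · show _ - _ = 0
        simp [OPAux.total]
    · have hFf : OPAux.Ffin n = {p0} :=
        Finset.eq_singleton_iff_unique_mem.2
          ⟨hp0, fun q hq => OPAux.Ffin_subsingleton q hq p0 hp0⟩
      rw [hFf, Finset.card_singleton]
end

section
/- For n ≥ 1, the sequence σmex̄(n) is weakly increasing: σmex̄(n) ≤ σmex̄(n+1). -/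
namespace OPaux

theorem ext {n : ℕ} {π₁ π₂ : Overpartition n} (h1 : π₁.parts = π₂.parts)
    (h2 : π₁.overlined = π₂.overlined) : π₁ = π₂ := by
  cases π₁; cases π₂; simp_all

theorem parts_sum_le {n : ℕ} (π : Overpartition n) : π.parts.sum ≤ n := by
  have := π.sum_eq; omega

theorem over_lt {n : ℕ} (π : Overpartition n) : ∀ m ∈ π.overlined, m < n + 1 := by
  intro m hm
  have h1 : m ≤ ∑ i ∈ π.overlined, i :=
    Finset.single_le_sum (f := fun i => i) (fun i _ => Nat.zero_le i) hm
  have := π.sum_eq; omega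

noncomputable def toAux {n : ℕ} (π : Overpartition n) :
    (Σ m : Fin (n + 1), (m : ℕ).Partition) × Finset (Fin (n + 1)) :=
  (⟨⟨π.parts.sum, Nat.lt_succ_of_le (parts_sum_le π)⟩,
    ⟨π.parts, fun h => π.parts_pos _ h, rfl⟩⟩, π.overlined.attachFin (over_lt π))

theorem toAux_inj {n : ℕ} : Function.Injective (toAux (n := n)) := by
  intro π₁ π₂ h
  have h1 := congrArg Prod.fst h
  have h2 : π₁.overlined.attachFin (over_lt π₁) = π₂.overlined.attachFin (over_lt π₂) := by
    simpa [toAux] using congrArg Prod.snd h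
  have hp : π₁.parts = π₂.parts := by
    simpa [toAux] using congrArg (fun x : (Σ m : Fin (n + 1), (m : ℕ).Partition) => x.2.parts) h1
  refine ext hp ?_
  ext a
  constructor <;> intro ha
  · have hlt := over_lt π₁ a ha
    have hm : (⟨a, hlt⟩ : Fin (n+1)) ∈ π₁.overlined.attachFin (over_lt π₁) :=
      (Finset.mem_attachFin _).2 ha
    rw [h2] at hm
    exact (Finset.mem_attachFin _).1 hm
  · have hlt := over_lt π₂ a ha
    have hm : (⟨a, hlt⟩ : Fin (n+1)) ∈ π₂.overlined.attachFin (over_lt π₂) :=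
      (Finset.mem_attachFin _).2 ha
    rw [← h2] at hm
    exact (Finset.mem_attachFin _).1 hm

instance instFinite (n : ℕ) : Finite (Overpartition n) :=
  Finite.of_injective _ (toAux_inj (n := n))

def addOne {n : ℕ} (π : Overpartition n) : Overpartition (n + 1) where
  parts := 1 ::ₘ π.parts
  overlined := π.overlined
  parts_pos := by
    intro i hi
    rcases Multiset.mem_cons.1 hi with h | h
    · omega
    · exact π.parts_pos i h
  overlined_pos := π.overlined_pos
  sum_eq := by
    have := π.sum_eq
    simp only [Multiset.sum_cons]
    omega

theorem addOne_inj {n : ℕ} : Function.Injective (addOne (n := n)) := by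
  intro π₁ π₂ h
  have hp : (1 ::ₘ π₁.parts) = (1 ::ₘ π₂.parts) :=
    congrArg (fun x : Overpartition (n+1) => x.parts) h
  have ho : π₁.overlined = π₂.overlined :=
    congrArg (fun x : Overpartition (n+1) => x.overlined) h
  exact ext ((Multiset.cons_inj_right 1).1 hp) ho

theorem mex_le_mex_addOne {n : ℕ} (π : Overpartition n) : π.mex ≤ (addOne π).mex := by
  unfold Overpartition.mex
  apply csInf_le_csInf (OrderBot.bddBelow _)
  · refine ⟨n + 2, ⟨by omega, fun hmem => ?_⟩⟩
    have h1 : (n + 2 : ℕ) ≤ (addOne π).parts.sum :=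
      Multiset.single_le_sum (fun x _ => Nat.zero_le x) _ hmem
    have h2 := parts_sum_le (addOne π); omega
  · rintro m ⟨hm, hmem⟩
    exact ⟨hm, fun hc => hmem (Multiset.mem_cons_of_mem hc)⟩

end OPaux

/-- σmex̄ is weakly increasing for n ≥ 1. -/
theorem stmt10 (n : ℕ) (hn : 1 ≤ n) : sigmaMex n ≤ sigmaMex (n + 1) := by
  classical
  have F1 : Fintype (Overpartition n) := Fintype.ofFinite _
  have F2 : Fintype (Overpartition (n + 1)) := Fintype.ofFinite _
  have key : ∀ (m : ℕ) (F : Fintype (Overpartition m)),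
      sigmaMex m = (Finset.univ.sigma fun π : Overpartition m => Finset.Icc 1 π.mex).card := by
    intro m F
    rw [sigmaMex, finsum_eq_sum_of_fintype, Finset.card_sigma]
    apply Finset.sum_congr rfl
    intro π _
    rw [Nat.card_Icc]; omega
  rw [key n F1, key (n + 1) F2]
  apply Finset.card_le_card_of_injOn (fun x => ⟨OPaux.addOne x.1, x.2⟩)
  · rintro ⟨π, j⟩ hx
    simp only [Finset.mem_coe, Finset.mem_sigma, Finset.mem_univ, Finset.mem_Icc, true_and] at hx ⊢
    exact ⟨hx.1, le_trans hx.2 (OPaux.mex_le_mex_addOne π)⟩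
  · rintro ⟨a1, a2⟩ _ ⟨b1, b2⟩ _ h
    have h1 : OPaux.addOne a1 = OPaux.addOne b1 := congrArg Sigma.fst h
    have h2 : a2 = b2 := congrArg (fun x : (Σ _ : Overpartition (n+1), ℕ) => x.2) h
    subst h2
    rw [OPaux.addOne_inj h1]
end

section
/- For each r ≥ 1 and n ≥ 0, the number of overpartitions π of n with least r-gap strictly greater than k equals p̄(n − r·T_k), where T_k = k(k+1)/2 (and p̄(m) = 0 for m < 0). -/
lemma Overpartition.ext' {n : ℕ} {π σ : Overpartition n}
    (h1 : π.parts = σ.parts) (h2 : π.overlined = σ.overlined) : π = σ := by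
  cases π; cases σ; simp_all

def staircase (k : ℕ) : Multiset ℕ := (Multiset.range k).map (· + 1)

lemma staircase_sum_two (k : ℕ) : (staircase k).sum * 2 = k * (k + 1) := by
  induction k with
  | zero => simp [staircase]
  | succ k ih =>
    have : staircase (k+1) = (k+1) ::ₘ staircase k := by
      simp [staircase, Multiset.range_succ]
    rw [this, Multiset.sum_cons]
    nlinarith

lemma staircase_sum (k : ℕ) : (staircase k).sum = k * (k + 1) / 2 := by
  have := staircase_sum_two k; omega

lemma mem_staircase {k a : ℕ} : a ∈ staircase k ↔ 1 ≤ a ∧ a ≤ k := by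
  simp only [staircase, Multiset.mem_map, Multiset.mem_range]
  constructor
  · rintro ⟨i, hi, rfl⟩; omega
  · rintro ⟨h1, h2⟩; exact ⟨a - 1, by omega, by omega⟩

lemma staircase_nodup (k : ℕ) : (staircase k).Nodup :=
  (Multiset.nodup_range k).map (fun a b => by omega)

lemma count_staircase (k a : ℕ) :
    (staircase k).count a = if 1 ≤ a ∧ a ≤ k then 1 else 0 := by
  split_ifs with h
  · exact Multiset.count_eq_one_of_mem (staircase_nodup k) (mem_staircase.mpr h)
  · exact Multiset.count_eq_zero.mpr (fun hm => h (mem_staircase.mp hm))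

lemma sum_nsmul_multiset (n : ℕ) (s : Multiset ℕ) : (n • s).sum = n * s.sum := by
  induction n with
  | zero => simp
  | succ n ih => rw [succ_nsmul, Multiset.sum_add, ih]; ring

lemma parts_sum_le {n : ℕ} (π : Overpartition n) : π.parts.sum ≤ n := by
  have := π.sum_eq; omega

lemma rgap_gt_iff {n : ℕ} (r k : ℕ) (hr : 1 ≤ r) (π : Overpartition n) :
    k < π.rgap r ↔ ∀ m, 1 ≤ m → m ≤ k → r ≤ π.parts.count m := by
  have hnotmem : (n + 1) ∉ π.parts := by
    intro hm
    have : (n+1) ≤ π.parts.sum := Multiset.single_le_sum (fun x _ => Nat.zero_le x) _ hm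
    have := parts_sum_le π; omega
  have hne : {m : ℕ | 0 < m ∧ π.parts.count m < r}.Nonempty :=
    ⟨n + 1, Nat.succ_pos n, by rw [Multiset.count_eq_zero.mpr hnotmem]; omega⟩
  constructor
  · intro h m h1 h2
    by_contra hc
    have hmem : m ∈ {m : ℕ | 0 < m ∧ π.parts.count m < r} := ⟨h1, by omega⟩
    have := Nat.sInf_le hmem
    unfold Overpartition.rgap at h; omega
  · intro h
    have hmem := Nat.sInf_mem hne
    obtain ⟨h1, h2⟩ := hmem
    by_contra hc
    push_neg at hc
    have := h _ h1 (by unfold Overpartition.rgap at hc; omega)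
    omega

lemma stair_le_parts {n : ℕ} (r k : ℕ) (π : Overpartition n)
    (h : ∀ m, 1 ≤ m → m ≤ k → r ≤ π.parts.count m) : r • staircase k ≤ π.parts := by
  rw [Multiset.le_iff_count]
  intro a
  rw [Multiset.count_nsmul, count_staircase]
  split_ifs with ha
  · simpa using h a ha.1 ha.2
  · simp

/-- The number of overpartitions of n with least r-gap > k equals p̄(n − r·T_k)
(and 0 when r·T_k > n). -/
theorem stmt18 (r n k : ℕ) (hr : 1 ≤ r) :
    Nat.card {π : Overpartition n // k < π.rgap r}
      = if r * (k * (k + 1) / 2) ≤ n then pbar (n - r * (k * (k + 1) / 2)) else 0 := by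
  set T : ℕ := r * (k * (k + 1) / 2) with hT
  have hSsum : (r • staircase k).sum = T := by
    rw [sum_nsmul_multiset, staircase_sum]
  split_ifs with h
  · -- bijection
    rw [pbar]
    refine Nat.card_congr ?_
    refine
      { toFun := fun π => ⟨π.1.parts - r • staircase k, π.1.overlined, ?_, π.1.overlined_pos, ?_⟩
        invFun := fun σ => ⟨⟨σ.parts + r • staircase k, σ.overlined, ?_, σ.overlined_pos, ?_⟩, ?_⟩
        left_inv := ?_
        right_inv := ?_ }
    · intro i hi
      exact π.1.parts_pos i (Multiset.mem_of_le (Multiset.sub_le_self _ _) hi)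
    · have hle : r • staircase k ≤ π.1.parts :=
        stair_le_parts r k π.1 ((rgap_gt_iff r k hr π.1).mp π.2)
      have h1 : π.1.parts - r • staircase k + r • staircase k = π.1.parts :=
        tsub_add_cancel_of_le hle
      have h2 := π.1.sum_eq
      have h3 : (π.1.parts - r • staircase k).sum + (r • staircase k).sum = π.1.parts.sum := by
        rw [← Multiset.sum_add, h1]
      omega
    · intro i hi
      rcases Multiset.mem_add.mp hi with h' | h'
      · exact σ.parts_pos i h'
      · have := mem_staircase.mp ((Multiset.mem_nsmul.mp h').2)
        omega
    · have h2 := σ.sum_eq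
      rw [Multiset.sum_add, hSsum]
      omega
    · rw [rgap_gt_iff r k hr]
      intro m h1 h2
      simp only [Multiset.count_add, Multiset.count_nsmul, count_staircase, h1, h2,
        and_self, if_true, mul_one]
      omega
    · intro π
      dsimp only
      apply Subtype.ext
      apply Overpartition.ext'
      · exact tsub_add_cancel_of_le (stair_le_parts r k π.1 ((rgap_gt_iff r k hr π.1).mp π.2))
      · rfl
    · intro σ
      dsimp only
      apply Overpartition.ext'
      · exact add_tsub_cancel_right _ _
      · rfl
  · -- empty
    rw [Nat.card_eq_zero]
    left
    constructor
    rintro ⟨π, hπ⟩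
    have hle : r • staircase k ≤ π.parts :=
      stair_le_parts r k π ((rgap_gt_iff r k hr π).mp hπ)
    have h1 := tsub_add_cancel_of_le hle
    have h3 : (π.parts - r • staircase k).sum + (r • staircase k).sum = π.parts.sum := by
      rw [← Multiset.sum_add, h1]
    have := parts_sum_le π
    omega
end
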